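/- arXiv:1104.2773 — 2 statements merged into one kernel-verified Lean document; each statement's English description precedes it below -/
import Mathlib

section
/- Let G = {θ ∈ ℝ^d : q(θ) ≤ 0} where q is convex and C¹ with ∇q(θ) ≠ 0 for all θ with q(θ) = 0, and G compact with nonempty interior. Then for any θ ∈ G and y ∈ ℝ^d, lim_{γ ↓ 0} γ^{-1}(P_G(θ + γy) − θ) = y − (yᵀe(θ))⁺ e(θ) 𝟙_{∂G}(θ), where P_G is the Euclidean projection onto G, e(θ) := ∇q(θ)/|∇q(θ)|, (x)⁺ := max(x,0), and 𝟙_{∂G}(θ) = 1 if q(θ) = 0 and 0 otherwise. -/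
set_option maxHeartbeats 4000000

open Filter Topology RealInnerProductSpace

variable {E : Type*} [NormedAddCommGroup E] [InnerProductSpace ℝ E] [CompleteSpace E]

/-- derivative of `q` along a line. -/
lemma aux_hasDerivAt (q : E → ℝ) (hq : ContDiff ℝ 1 q) (p v : E) :
    HasDerivAt (fun s : ℝ => q (p + s • v)) ⟪gradient q p, v⟫ 0 := by
  have hdiff : DifferentiableAt ℝ q p := (hq.differentiable one_ne_zero).differentiableAt
  have hgrad := hdiff.hasGradientAt
  rw [hasGradientAt_iff_hasFDerivAt] at hgrad
  have hline : HasDerivAt (fun s : ℝ => p + s • v) v 0 := by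
    simpa using (((hasDerivAt_id (0:ℝ)).smul_const v).const_add p)
  have hgrad' : HasFDerivAt q ((InnerProductSpace.toDual ℝ E) (gradient q p)) (p + (0:ℝ) • v) := by
    simpa using hgrad
  have := hgrad'.comp_hasDerivAt (x := (0:ℝ)) hline
  simpa [Function.comp_def] using this

lemma aux_slope (q : E → ℝ) (hq : ContDiff ℝ 1 q) (p v : E) :
    Tendsto (fun γ : ℝ => γ⁻¹ * (q (p + γ • v) - q p)) (𝓝[>] 0)
      (𝓝 ⟪gradient q p, v⟫) := by
  have h := (hasDerivAt_iff_tendsto_slope.1 (aux_hasDerivAt q hq p v))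
  have h2 : Tendsto (slope (fun s : ℝ => q (p + s • v)) 0) (𝓝[>] 0)
      (𝓝 ⟪gradient q p, v⟫) :=
    h.mono_left (nhdsWithin_mono 0 (fun x hx => ne_of_gt hx))
  refine h2.congr (fun γ => ?_)
  simp [slope_def_field, div_eq_inv_mul]

lemma aux_grad_ineq (q : E → ℝ) (hq_conv : ConvexOn ℝ Set.univ q)
    (hq : ContDiff ℝ 1 q) (p z : E) :
    q p + ⟪gradient q p, z - p⟫ ≤ q z := by
  have h := aux_slope q hq p (z - p)
  have hev : ∀ᶠ γ : ℝ in 𝓝[>] 0, γ⁻¹ * (q (p + γ • (z - p)) - q p) ≤ q z - q p := by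
    filter_upwards [Ioo_mem_nhdsGT_of_mem (Set.left_mem_Ico.2 zero_lt_one)] with γ hγ
    obtain ⟨hγ0, hγ1⟩ := hγ
    have hcomb := hq_conv.2 (Set.mem_univ p) (Set.mem_univ z)
      (show (0:ℝ) ≤ 1 - γ by linarith) (show (0:ℝ) ≤ γ by linarith)
      (show (1 - γ) + γ = 1 by ring)
    have heq : (1 - γ) • p + γ • z = p + γ • (z - p) := by
      simp [smul_sub, sub_smul]; abel
    rw [heq] at hcomb
    rw [smul_eq_mul, smul_eq_mul] at hcomb
    rw [inv_mul_le_iff₀ hγ0]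
    nlinarith
  have := le_of_tendsto h hev
  linarith

lemma aux_nna (s N R A : ℝ) (hsum : (A - s) ^ 2 + N ^ 2 ≤ (A + R) ^ 2)
    (hA : 0 ≤ A) (hR : 0 ≤ R) (hs : s ≤ 0) :
    -s ≤ R ∧ N ^ 2 ≤ R * (2 * A + R) := by
  constructor
  · nlinarith [sq_nonneg N, mul_nonneg hA hR, mul_nonneg hA (neg_nonneg.2 hs),
      mul_nonneg hR (neg_nonneg.2 hs)]
  · nlinarith [mul_nonneg hA (neg_nonneg.2 hs), sq_nonneg s]

/-- Directional derivative of the projection onto `G = {q ≤ 0}` at a point `θ ∈ G`: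
`lim_{γ↓0} γ⁻¹(P_G(θ + γy) − θ) = y − (yᵀe(θ))⁺ e(θ) 𝟙_{∂G}(θ)`. -/
theorem stmt_5 (d : ℕ) (hd : 1 ≤ d)
    (q : EuclideanSpace ℝ (Fin d) → ℝ)
    (hq_conv : ConvexOn ℝ Set.univ q)
    (hq_smooth : ContDiff ℝ 1 q)
    (hq_grad : ∀ θ, q θ = 0 → gradient q θ ≠ 0)
    (G : Set (EuclideanSpace ℝ (Fin d))) (hG : G = {θ | q θ ≤ 0})
    (hG_compact : IsCompact G) (hG_int : (interior G).Nonempty)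
    (P : EuclideanSpace ℝ (Fin d) → EuclideanSpace ℝ (Fin d))
    (hP : ∀ x, P x ∈ G ∧ ∀ z ∈ G, ‖x - P x‖ ≤ ‖x - z‖)
    (e : EuclideanSpace ℝ (Fin d) → EuclideanSpace ℝ (Fin d))
    (he : e = fun θ => ‖gradient q θ‖⁻¹ • gradient q θ)
    (θ : EuclideanSpace ℝ (Fin d)) (hθ : θ ∈ G) (y : EuclideanSpace ℝ (Fin d)) :
    Tendsto (fun γ : ℝ => γ⁻¹ • (P (θ + γ • y) - θ)) (𝓝[>] 0)
      (𝓝 (y - (if q θ = 0 then (max (inner ℝ y (e θ) : ℝ) 0) • e θ else 0))) := by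
  have hPfix : ∀ x ∈ G, P x = x := by
    intro x hx
    have h1 := (hP x).2 x hx
    simp only [sub_self, norm_zero] at h1
    have h2 : x - P x = 0 := norm_le_zero_iff.1 h1
    rw [sub_eq_zero] at h2; exact h2.symm
  -- helper: if q(θ+γy) < 0 eventually, limit is y
  have hcase_in : (∀ᶠ γ : ℝ in 𝓝[>] 0, q (θ + γ • y) ≤ 0) →
      Tendsto (fun γ : ℝ => γ⁻¹ • (P (θ + γ • y) - θ)) (𝓝[>] 0) (𝓝 y) := by
    intro hev
    have : (fun γ : ℝ => γ⁻¹ • (P (θ + γ • y) - θ)) =ᶠ[𝓝[>] 0] (fun _ => y) := by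
      filter_upwards [hev, self_mem_nhdsWithin] with γ hγ hγ0
      have hmem : θ + γ • y ∈ G := by rw [hG]; exact hγ
      rw [hPfix _ hmem]
      rw [add_sub_cancel_left, smul_smul, inv_mul_cancel₀ (ne_of_gt hγ0), one_smul]
    exact (tendsto_congr' this).2 tendsto_const_nhds
  by_cases hb : q θ = 0
  · rw [if_pos hb]
    set g := gradient q θ with hgdef
    have hg : g ≠ 0 := hq_grad θ hb
    have hgn : (0:ℝ) < ‖g‖ := norm_pos_iff.2 hg
    have heθ : e θ = ‖g‖⁻¹ • g := by rw [he]
    clear_value g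
    have hee : ⟪e θ, e θ⟫ = 1 := by
      rw [heθ, real_inner_smul_left, real_inner_smul_right, real_inner_self_eq_norm_sq]
      field_simp
    have hne : ‖e θ‖ = 1 := by
      rw [heθ, norm_smul, norm_inv, norm_norm]
      field_simp
    set α : ℝ := inner ℝ y (e θ) with hα
    clear_value α
    have hge : ⟪g, e θ⟫ = ‖g‖ := by
      rw [heθ, real_inner_smul_right, real_inner_self_eq_norm_sq]
      field_simp
      try ring
    have hgy : ⟪g, y⟫ = ‖g‖ * α := by
      rw [hα, heθ, real_inner_smul_right, real_inner_comm]
      field_simp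
      try ring
    rcases lt_or_ge α 0 with hαneg | hαpos
    · rw [max_eq_right hαneg.le, zero_smul, sub_zero]
      apply hcase_in
      have hsl := aux_slope q hq_smooth θ y
      rw [← hgdef] at hsl
      have hneg : ⟪g, y⟫ < 0 := by
        rw [hgy]; exact mul_neg_of_pos_of_neg hgn hαneg
      have hev : ∀ᶠ γ : ℝ in 𝓝[>] 0, γ⁻¹ * (q (θ + γ • y) - q θ) < 0 :=
        hsl.eventually_lt_const hneg
      filter_upwards [hev, self_mem_nhdsWithin] with γ h hγ0
      rw [hb, sub_zero] at h
      nlinarith [inv_pos.2 (Set.mem_Ioi.1 hγ0)]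
    · rw [max_eq_left hαpos]
      set u := y - α • e θ with hu
      clear_value u
      have hgu : ⟪g, u⟫ = 0 := by
        rw [hu, inner_sub_right, real_inner_smul_right, hge, hgy]; ring
      have hey : ⟪e θ, y⟫ = α := by rw [hα, real_inner_comm]
      have heu : ⟪e θ, u⟫ = 0 := by
        rw [hu, inner_sub_right, real_inner_smul_right, hee, hey]; ring
      -- Slater point
      obtain ⟨z₀, hz₀i⟩ := hG_int
      have hz₀G : z₀ ∈ G := interior_subset hz₀i
      have hz₀ : q z₀ < 0 := by
        rcases lt_or_eq_of_le (show q z₀ ≤ 0 by rw [hG] at hz₀G; exact hz₀G) with h | h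
        · exact h
        · exfalso
          have hg₀ : gradient q z₀ ≠ 0 := hq_grad z₀ h
          have hg₀n : (0:ℝ) < ‖gradient q z₀‖ := norm_pos_iff.2 hg₀
          obtain ⟨ε, hε, hball⟩ := Metric.mem_nhds_iff.1 (mem_interior_iff_mem_nhds.1 hz₀i)
          set s : ℝ := ε / (2 * ‖gradient q z₀‖) with hs
          have hs0 : 0 < s := by rw [hs]; positivity
          clear_value s
          have hmem : z₀ + s • gradient q z₀ ∈ G := by
            apply hball
            rw [Metric.mem_ball, dist_eq_norm, add_sub_cancel_left, norm_smul,
              Real.norm_eq_abs, abs_of_pos hs0]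
            have hseq : s * ‖gradient q z₀‖ = ε / 2 := by
              rw [hs]; field_simp; try ring
            rw [hseq]; linarith
          have hle : q (z₀ + s • gradient q z₀) ≤ 0 := by rw [hG] at hmem; exact hmem
          have hgi := aux_grad_ineq q hq_conv hq_smooth z₀ (z₀ + s • gradient q z₀)
          rw [add_sub_cancel_left, real_inner_smul_right, real_inner_self_eq_norm_sq] at hgi
          nlinarith [mul_pos hs0 (pow_pos hg₀n 2)]
      set δ : ℝ := -q z₀ with hδdef
      have hδ : 0 < δ := by rw [hδdef]; linarith
      clear_value δ
      set M : ℝ := ‖θ - z₀‖ + ‖u‖ with hM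
      have hM0 : 0 ≤ M := by rw [hM]; positivity
      set m : ℝ → ℝ := fun γ => max (q (θ + γ • u)) 0 with hm
      have hm0 : ∀ γ, 0 ≤ m γ := fun γ => le_max_right _ _
      have hqlem : ∀ s : ℝ, q (θ + s • u) ≤ m s := fun s => le_max_left _ _
      have hmabs : ∀ s : ℝ, m s ≤ |q (θ + s • u)| :=
        fun s => max_le (le_abs_self _) (abs_nonneg _)
      have hmtend : Tendsto (fun γ : ℝ => γ⁻¹ * m γ) (𝓝[>] 0) (𝓝 0) := by
        have hsl := aux_slope q hq_smooth θ u
        rw [← hgdef, hgu, hb] at hsl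
        have habs : Tendsto (fun γ : ℝ => |γ⁻¹ * (q (θ + γ • u) - 0)|) (𝓝[>] 0)
            (𝓝 |0|) := hsl.abs
        rw [abs_zero] at habs
        apply squeeze_zero' ?_ ?_ habs
        · filter_upwards [self_mem_nhdsWithin] with γ hγ
          exact mul_nonneg (inv_nonneg.2 (le_of_lt hγ)) (hm0 γ)
        · filter_upwards [self_mem_nhdsWithin] with γ hγ
          rw [sub_zero, abs_mul, abs_of_pos (inv_pos.2 hγ)]
          exact mul_le_mul_of_nonneg_left (hmabs γ) (inv_nonneg.2 (le_of_lt hγ))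
      clear_value m
      set ρ : ℝ → ℝ := fun γ => m γ * M / δ / γ with hρ
      clear_value ρ
      have hρtend : Tendsto ρ (𝓝[>] 0) (𝓝 0) := by
        have heq : ρ = fun γ => (γ⁻¹ * m γ) * (M / δ) := by
          funext γ; simp only [hρ]; ring
        rw [heq]
        simpa using hmtend.mul_const (M / δ)
      set B : ℝ → ℝ := fun γ => ρ γ + Real.sqrt (2 * α * ρ γ + ρ γ ^ 2) with hB
      clear_value B
      have hBtend : Tendsto B (𝓝[>] 0) (𝓝 0) := by
        have h1 : Tendsto (fun γ => 2 * α * ρ γ + ρ γ ^ 2) (𝓝[>] 0) (𝓝 0) := by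
          have := ((hρtend.const_mul (2 * α)).add (hρtend.pow 2))
          simpa using this
        have h2 : Tendsto (fun γ => Real.sqrt (2 * α * ρ γ + ρ γ ^ 2)) (𝓝[>] 0) (𝓝 0) := by
          have := (Real.continuous_sqrt.tendsto 0).comp h1
          simpa [Real.sqrt_zero, Function.comp_def] using this
        have := hρtend.add h2
        rw [add_zero] at this
        rw [hB]
        exact this
      rw [tendsto_iff_norm_sub_tendsto_zero]
      apply squeeze_zero' (Filter.Eventually.of_forall fun _ => norm_nonneg _) ?_ hBtend
      filter_upwards [Ioo_mem_nhdsGT_of_mem (Set.left_mem_Ico.2 zero_lt_one)] with γ hγ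
      obtain ⟨hγ0, hγ1⟩ := hγ
      set x := θ + γ • y with hx
      set p := P x with hp
      have hpG : p ∈ G := (hP x).1
      have hmin : ∀ z ∈ G, ‖x - p‖ ≤ ‖x - z‖ := (hP x).2
      clear_value x p
      have hqp : q p ≤ 0 := by rw [hG] at hpG; exact hpG
      set a : ℝ := ⟪p - θ, e θ⟫ with ha
      clear_value a
      set t := p - θ - a • e θ with ht
      clear_value t
      have haneg : a ≤ 0 := by
        have h1 := aux_grad_ineq q hq_conv hq_smooth θ p
        rw [← hgdef, hb] at h1
        have h2 : ⟪g, p - θ⟫ ≤ 0 := by linarith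
        have h3 : a = ‖g‖⁻¹ * ⟪g, p - θ⟫ := by
          rw [ha, heθ, real_inner_smul_right, real_inner_comm]
        rw [h3]
        exact mul_nonpos_of_nonneg_of_nonpos (inv_nonneg.2 hgn.le) h2
      have het : ⟪e θ, t⟫ = 0 := by
        rw [ht, inner_sub_right, real_inner_smul_right, hee,
          real_inner_comm, ← ha]; ring
      set t₀ : ℝ := m γ / (m γ + δ) with ht₀
      have hden : 0 < m γ + δ := by have := hm0 γ; linarith
      have ht₀0 : 0 ≤ t₀ := div_nonneg (hm0 γ) hden.le
      clear_value t₀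
      have ht₀1 : t₀ ≤ 1 := by rw [ht₀, div_le_one hden]; linarith
      set xu := θ + γ • u with hxu
      clear_value xu
      set w := (1 - t₀) • xu + t₀ • z₀ with hw
      clear_value w
      have hwG : w ∈ G := by
        rw [hG]
        show q w ≤ 0
        have hcomb := hq_conv.2 (Set.mem_univ xu) (Set.mem_univ z₀)
          (show (0:ℝ) ≤ 1 - t₀ by linarith) ht₀0 (show (1 - t₀) + t₀ = 1 by ring)
        rw [smul_eq_mul, smul_eq_mul, ← hw] at hcomb
        have h1 : q xu ≤ m γ := by rw [hxu]; exact hqlem γ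
        have h2 : t₀ * (m γ + δ) = m γ := by rw [ht₀]; exact div_mul_cancel₀ _ hden.ne'
        have h3 : q z₀ = -δ := by rw [hδdef]; ring
        nlinarith
      set r : ℝ := m γ * M / δ with hr
      have hr0 : 0 ≤ r := by
        rw [hr]
        have := hm0 γ
        positivity
      clear_value r
      have hdist : ‖x - p‖ ≤ γ * α + r := by
        have h1 := hmin w hwG
        have h2 : ‖x - w‖ ≤ ‖x - xu‖ + ‖xu - w‖ := by
          have h : x - w = (x - xu) + (xu - w) := by abel
          rw [h]; exact norm_add_le _ _
        have h3 : x - xu = γ • (α • e θ) := by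
          rw [hx, hxu, hu]; module
        have h4 : ‖x - xu‖ = γ * α := by
          rw [h3, norm_smul, norm_smul, hne, Real.norm_eq_abs, Real.norm_eq_abs,
            abs_of_pos hγ0, abs_of_nonneg hαpos, mul_one]
        have h5 : xu - w = t₀ • (xu - z₀) := by rw [hw]; module
        have h6 : ‖xu - z₀‖ ≤ M := by
          have h : xu - z₀ = (θ - z₀) + γ • u := by rw [hxu]; abel
          rw [h, hM]
          refine (norm_add_le _ _).trans ?_
          have : ‖γ • u‖ ≤ ‖u‖ := by
            rw [norm_smul, Real.norm_eq_abs, abs_of_pos hγ0]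
            nlinarith [norm_nonneg u]
          linarith
        have h7 : ‖xu - w‖ ≤ r := by
          rw [h5, norm_smul, Real.norm_eq_abs, abs_of_nonneg ht₀0]
          have ht₀' : t₀ ≤ m γ / δ := by
            rw [ht₀, div_le_div_iff₀ hden hδ]
            nlinarith [hm0 γ]
          calc t₀ * ‖xu - z₀‖ ≤ (m γ / δ) * M := by
                refine mul_le_mul ht₀' h6 (norm_nonneg _) ?_
                have := hm0 γ
                positivity
            _ = r := by rw [hr]; ring
        calc ‖x - p‖ ≤ ‖x - w‖ := h1
          _ ≤ ‖x - xu‖ + ‖xu - w‖ := h2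
          _ ≤ γ * α + r := by rw [h4]; linarith
      have hdecomp : x - p = (γ * α - a) • e θ + (γ • u - t) := by
        rw [hx, ht, hu]; module
      have hnorm2 : ‖x - p‖ ^ 2 = (γ * α - a) ^ 2 + ‖γ • u - t‖ ^ 2 := by
        rw [hdecomp, norm_add_sq_real]
        have h8 : ⟪(γ * α - a) • e θ, γ • u - t⟫ = 0 := by
          rw [real_inner_smul_left, inner_sub_right, real_inner_smul_right, heu, het]; ring
        have h9 : ‖(γ * α - a) • e θ‖ = |γ * α - a| := by
          rw [norm_smul, hne, mul_one, Real.norm_eq_abs]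
        rw [h8, h9, sq_abs]; ring
      have hsum : (γ * α - a) ^ 2 + ‖γ • u - t‖ ^ 2 ≤ (γ * α + r) ^ 2 := by
        rw [← hnorm2]
        exact pow_le_pow_left₀ (norm_nonneg _) hdist 2
      have hgen : 0 ≤ γ * α := mul_nonneg hγ0.le hαpos
      have hsum' : (γ * α - a) ^ 2 + ‖γ • u - t‖ ^ 2 ≤ (γ * α + r) ^ 2 := hsum
      obtain ⟨hna, ht2⟩ := aux_nna a (‖γ • u - t‖) r (γ * α) hsum' hgen hr0 haneg
      have ht2 : ‖γ • u - t‖ ^ 2 ≤ r * (2 * (γ * α) + r) := ht2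
      have hterm : ‖γ • u - t‖ ≤ Real.sqrt (r * (2 * (γ * α) + r)) := by
        rw [← Real.sqrt_sq (norm_nonneg (γ • u - t))]
        exact Real.sqrt_le_sqrt ht2
      have hkey : ‖γ⁻¹ • (p - θ) - u‖ ≤ γ⁻¹ * (r + Real.sqrt (r * (2 * (γ * α) + r))) := by
        have h10 : γ⁻¹ • (p - θ) - u = γ⁻¹ • ((p - θ) - γ • u) := by
          rw [smul_sub γ⁻¹ (p - θ) (γ • u), smul_smul, inv_mul_cancel₀ hγ0.ne', one_smul]
        have h11 : (p - θ) - γ • u = a • e θ + (t - γ • u) := by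
          rw [ht]; module
        rw [h10, h11, norm_smul, Real.norm_eq_abs, abs_of_pos (inv_pos.2 hγ0)]
        have h12 : ‖a • e θ + (t - γ • u)‖ ≤ r + Real.sqrt (r * (2 * (γ * α) + r)) := by
          refine (norm_add_le _ _).trans ?_
          have h13 : ‖a • e θ‖ = -a := by
            rw [norm_smul, hne, mul_one, Real.norm_eq_abs, abs_of_nonpos haneg]
          have h14 : ‖t - γ • u‖ = ‖γ • u - t‖ := norm_sub_rev _ _
          rw [h13, h14]
          exact add_le_add hna hterm
        exact mul_le_mul_of_nonneg_left h12 (inv_nonneg.2 hγ0.le)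
      refine hkey.trans (le_of_eq ?_)
      have hργ : ρ γ = r / γ := by rw [hρ, hr]
      simp only [hB]
      rw [hργ]
      have hs1 : γ⁻¹ * Real.sqrt (r * (2 * (γ * α) + r))
          = Real.sqrt (2 * α * (r / γ) + (r / γ) ^ 2) := by
        have hq2 : 2 * α * (r / γ) + (r / γ) ^ 2 = (γ⁻¹) ^ 2 * (r * (2 * (γ * α) + r)) := by
          field_simp [hγ0.ne']
        rw [hq2, Real.sqrt_mul (sq_nonneg _), Real.sqrt_sq (inv_pos.2 hγ0).le]
      rw [mul_add, hs1, inv_mul_eq_div]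
  · rw [if_neg hb, sub_zero]
    have hlt : q θ < 0 := lt_of_le_of_ne (by rw [hG] at hθ; exact hθ) hb
    apply hcase_in
    have hcont : ContinuousAt (fun γ : ℝ => q (θ + γ • y)) 0 :=
      (hq_smooth.continuous.comp (by fun_prop)).continuousAt
    have : ∀ᶠ γ : ℝ in 𝓝 (0:ℝ), q (θ + γ • y) < 0 := by
      have h0 : q (θ + (0:ℝ) • y) < 0 := by simpa using hlt
      exact hcont.eventually_lt_const h0
    exact (this.filter_mono nhdsWithin_le_nhds).mono fun γ h => le_of_lt h
end

section
/- Let f : ℝ^d → ℝ be C¹ with ∇f L-Lipschitz, let (γ_n) be positive with ∑γ_n = ∞ and ∑γ_n² < ∞, and suppose the level sets of f are compact and the set 𝓛 = {θ : ∇f(θ) = 0} is such that f(𝓛) has empty interior. Then the deterministic gradient iteration t_{n+1} = t_n − γ_{n+1}∇f(t_n), started from any t₀, satisfies d(t_n, 𝓛) → 0. -/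
open Filter Topology

lemma crossing_lemma (G γ : ℕ → ℝ) (K : ℝ) (hK : 0 < K)
    (hGpos : ∀ n, 0 ≤ G n) (hγpos : ∀ n, 0 < γ n)
    (hstep : ∀ n, G (n + 1) ≤ G n + K * (γ (n + 1) * G n))
    (hsum : Summable (fun n => γ (n + 1) * G n ^ 2))
    (hγ1 : ¬ Summable γ) (hγ0 : Tendsto γ atTop (𝓝 0)) :
    Tendsto G atTop (𝓝 0) := by
  classical
  set S : ℕ → ℝ := fun n => γ (n + 1) * G n ^ 2 with hSdef
  have hS0 : ∀ n, 0 ≤ S n := fun n => mul_nonneg (hγpos _).le (sq_nonneg _)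
  -- chaining inequality
  have chain : ∀ a b, a ≤ b → G b ≤ G a + K * ∑ i ∈ Finset.Ico a b, γ (i + 1) * G i := by
    intro a b hab
    induction b, hab using Nat.le_induction with
    | base => simp
    | succ b hb ih =>
      have h1 := hstep b
      have h2 : ∑ i ∈ Finset.Ico a (b + 1), γ (i + 1) * G i
          = (∑ i ∈ Finset.Ico a b, γ (i + 1) * G i) + γ (b + 1) * G b :=
        Finset.sum_Ico_succ_top hb _
      rw [h2]; linarith
  by_contra hcon
  have hfreq : ∃ ε > 0, ∀ N, ∃ n ≥ N, ε ≤ G n := by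
    by_contra hc
    push_neg at hc
    apply hcon
    rw [Metric.tendsto_atTop]
    intro ε hε
    obtain ⟨N, hN⟩ := hc ε hε
    exact ⟨N, fun n hn => by
      rw [Real.dist_eq, sub_zero, abs_of_nonneg (hGpos n)]; exact hN n hn⟩
  obtain ⟨ε, hε, hfreq⟩ := hfreq
  -- frequently small
  have hsmall : ∀ N, ∃ m ≥ N, G m ≤ ε / 2 := by
    intro N
    by_contra hc
    push_neg at hc
    apply hγ1
    have key : Summable (fun n => γ (n + (N + 1))) := by
      apply Summable.of_nonneg_of_le (fun n => (hγpos _).le) (fun n => ?_)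
        (((summable_nat_add_iff N).mpr hsum).mul_left (4 / ε ^ 2))
      have hg : ε / 2 < G (n + N) := hc (n + N) (Nat.le_add_left _ _)
      have hγ' : 0 < γ (n + N + 1) := hγpos _
      have h1 : γ (n + (N + 1)) = γ (n + N + 1) := by ring_nf
      rw [h1, div_mul_eq_mul_div, le_div_iff₀ (by positivity)]
      show γ (n + N + 1) * ε ^ 2 ≤ 4 * (γ (n + N + 1) * G (n + N) ^ 2)
      have hG2 : ε ^ 2 ≤ 4 * G (n + N) ^ 2 := by nlinarith [hGpos (n + N)]
      nlinarith [mul_le_mul_of_nonneg_left hG2 hγ'.le]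
    exact (summable_nat_add_iff (N + 1)).mp key
  -- tail sums
  set T : ℕ → ℝ := fun N => ∑' k, S (k + N) with hTdef
  have hT0 : Tendsto T atTop (𝓝 0) := tendsto_sum_nat_add S
  have hTnonneg : ∀ N, 0 ≤ T N := fun N => tsum_nonneg (fun k => hS0 _)
  have hsum_shift : ∀ N, Summable (fun k => S (k + N)) :=
    fun N => (summable_nat_add_iff N).mpr hsum
  have hIco_le_T : ∀ N a b, N ≤ a → (∑ i ∈ Finset.Ico a b, S i) ≤ T N := by
    intro N a b hNa
    have heq : ∑ i ∈ Finset.Ico a b, S i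
        = ∑ j ∈ (Finset.Ico a b).image (· - N), S (j + N) := by
      rw [Finset.sum_image]
      · exact Finset.sum_congr rfl (fun i hi => by
          have := Finset.mem_Ico.mp hi; congr 1; omega)
      · intro x hx y hy h
        have hx' := Finset.mem_Ico.mp hx
        have hy' := Finset.mem_Ico.mp hy
        dsimp only at h
        omega
    rw [heq]
    exact Summable.sum_le_tsum _ (fun i _ => hS0 _) (hsum_shift N)
  -- choose N₀
  obtain ⟨N₁, hN₁⟩ := (Metric.tendsto_atTop.mp hT0) (ε ^ 2 / (32 * K)) (by positivity)
  obtain ⟨N₂, hN₂⟩ := (Metric.tendsto_atTop.mp hγ0) (1 / (4 * K)) (by positivity)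
  set N₀ := max N₁ N₂ with hN₀def
  have hTN₀ : T N₀ < ε ^ 2 / (32 * K) := by
    have := hN₁ N₀ (le_max_left _ _)
    rw [Real.dist_eq, sub_zero, abs_of_nonneg (hTnonneg _)] at this
    exact this
  have hγN₀ : ∀ k ≥ N₀, γ k ≤ 1 / (4 * K) := by
    intro k hk
    have := hN₂ k (le_trans (le_max_right _ _) hk)
    rw [Real.dist_eq, sub_zero, abs_of_nonneg (hγpos k).le] at this
    exact this.le
  -- pick m, n, m'
  obtain ⟨m, hmN₀, hm⟩ := hsmall N₀
  have hexn : ∃ n, m + 1 ≤ n ∧ ε ≤ G n := by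
    obtain ⟨n, hn, h⟩ := hfreq (m + 1); exact ⟨n, hn, h⟩
  set n := Nat.find hexn with hndef
  obtain ⟨hn1, hn2⟩ := Nat.find_spec hexn
  have hmin : ∀ i, m < i → i < n → G i < ε := by
    intro i h1 h2
    have := Nat.find_min hexn h2
    push_neg at this
    exact this h1
  set m' := Nat.findGreatest (fun i => G i ≤ ε / 2) (n - 1) with hm'def
  have hmn1 : m ≤ n - 1 := by omega
  have hm'ge : m ≤ m' := Nat.le_findGreatest hmn1 hm
  have hm'le : m' ≤ n - 1 := Nat.findGreatest_le _
  have hm'P : G m' ≤ ε / 2 := Nat.findGreatest_spec (P := fun i => G i ≤ ε / 2) hmn1 hm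
  have hbig : ∀ i, m' < i → i ≤ n - 1 → ε / 2 < G i := by
    intro i h1 h2
    exact lt_of_not_ge (Nat.findGreatest_is_greatest h1 h2)
  have hm'n : m' < n := by omega
  -- chain from m' to n
  have hchain := chain m' n hm'n.le
  rw [Finset.sum_eq_sum_Ico_succ_bot hm'n] at hchain
  -- bound the first term
  have hb1 : K * (γ (m' + 1) * G m') ≤ ε / 8 := by
    have h1 : γ (m' + 1) ≤ 1 / (4 * K) := hγN₀ _ (by omega)
    have h2 : γ (m' + 1) * G m' ≤ (1 / (4 * K)) * (ε / 2) :=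
      mul_le_mul h1 hm'P (hGpos _) (by positivity)
    calc K * (γ (m' + 1) * G m') ≤ K * ((1 / (4 * K)) * (ε / 2)) :=
          mul_le_mul_of_nonneg_left h2 hK.le
      _ = ε / 8 := by field_simp; ring
  -- bound the rest
  have hb2 : ∑ i ∈ Finset.Ico (m' + 1) n, γ (i + 1) * G i ≤ (2 / ε) * T N₀ := by
    have hterm : ∀ i ∈ Finset.Ico (m' + 1) n, γ (i + 1) * G i ≤ (2 / ε) * S i := by
      intro i hi
      obtain ⟨hi1, hi2⟩ := Finset.mem_Ico.mp hi
      have hGi : ε / 2 < G i := hbig i (by omega) (by omega)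
      rw [div_mul_eq_mul_div, le_div_iff₀ hε]
      show γ (i + 1) * G i * ε ≤ 2 * (γ (i + 1) * G i ^ 2)
      nlinarith [mul_nonneg (hγpos (i + 1)).le (hGpos i)]
    calc ∑ i ∈ Finset.Ico (m' + 1) n, γ (i + 1) * G i
        ≤ ∑ i ∈ Finset.Ico (m' + 1) n, (2 / ε) * S i := Finset.sum_le_sum hterm
      _ = (2 / ε) * ∑ i ∈ Finset.Ico (m' + 1) n, S i := by rw [Finset.mul_sum]
      _ ≤ (2 / ε) * T N₀ := by
          apply mul_le_mul_of_nonneg_left (hIco_le_T N₀ (m' + 1) n (by omega)) (by positivity)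
  have hb2' : K * ∑ i ∈ Finset.Ico (m' + 1) n, γ (i + 1) * G i ≤ ε / 16 := by
    calc K * ∑ i ∈ Finset.Ico (m' + 1) n, γ (i + 1) * G i
        ≤ K * ((2 / ε) * T N₀) := mul_le_mul_of_nonneg_left hb2 hK.le
      _ ≤ K * ((2 / ε) * (ε ^ 2 / (32 * K))) := by
          apply mul_le_mul_of_nonneg_left _ hK.le
          exact mul_le_mul_of_nonneg_left hTN₀.le (by positivity)
      _ = ε / 16 := by field_simp; ring
  have hfinal : ε ≤ ε / 2 + ε / 8 + ε / 16 := by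
    have := hn2
    have h := hchain
    rw [mul_add] at h
    linarith
  linarith

/-- Convergence of the deterministic gradient iteration
`t_{n+1} = t_n − γ_{n+1} ∇f(t_n)` to the critical set `𝓛 = {∇f = 0}`. -/
theorem stmt_12 (d : ℕ) (hd : 1 ≤ d)
    (f : EuclideanSpace ℝ (Fin d) → ℝ)
    (hf : ContDiff ℝ 1 f)
    (L : NNReal) (hf_lip : LipschitzWith L (gradient f))
    (hlevel : ∀ c : ℝ, IsCompact {θ | f θ ≤ c})
    (𝓛 : Set (EuclideanSpace ℝ (Fin d))) (h𝓛 : 𝓛 = {θ | gradient f θ = 0})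
    (hfL : interior (f '' 𝓛) = ∅)
    (γ : ℕ → ℝ) (hγpos : ∀ n, 0 < γ n)
    (hγ1 : ¬ Summable γ) (hγ2 : Summable (fun n => (γ n) ^ 2))
    (t : ℕ → EuclideanSpace ℝ (Fin d))
    (hrec : ∀ n, t (n + 1) = t n - γ (n + 1) • gradient f (t n)) :
    Tendsto (fun n => Metric.infDist (t n) 𝓛) atTop (𝓝 0) := by
  classical
  obtain ⟨K, hKdef⟩ : ∃ K : ℝ, K = (L : ℝ) + 1 := ⟨_, rfl⟩
  have hK : 0 < K := by rw [hKdef]; positivity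
  obtain ⟨G, hGdef⟩ : ∃ G : ℕ → ℝ, ∀ n, G n = ‖gradient f (t n)‖ := ⟨_, fun _ => rfl⟩
  have hGpos : ∀ n, 0 ≤ G n := fun n => by rw [hGdef]; exact norm_nonneg _
  have hdiff : Differentiable ℝ f := hf.differentiable one_ne_zero
  have hfd : ∀ x, fderiv ℝ f x = InnerProductSpace.toDual ℝ (EuclideanSpace ℝ (Fin d)) (gradient f x) :=
    fun x => ((hdiff x).hasGradientAt.hasFDerivAt).fderiv
  -- descent lemma
  have descent : ∀ x y : EuclideanSpace ℝ (Fin d),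
      f y ≤ f x + inner ℝ (gradient f x) (y - x) + K * ‖y - x‖ ^ 2 := by
    intro x y
    have bound : ∀ z ∈ Metric.closedBall x ‖y - x‖,
        ‖fderiv ℝ f z - fderiv ℝ f x‖ ≤ K * ‖y - x‖ := by
      intro z hz
      have h1 : ‖fderiv ℝ f z - fderiv ℝ f x‖ = ‖gradient f z - gradient f x‖ := by
        rw [hfd z, hfd x, ← map_sub]
        exact (InnerProductSpace.toDual ℝ (EuclideanSpace ℝ (Fin d))).norm_map _
      rw [h1]
      have h2 := hf_lip.dist_le_mul z x
      rw [dist_eq_norm, dist_eq_norm] at h2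
      have h3 : ‖z - x‖ ≤ ‖y - x‖ := by
        rw [← dist_eq_norm]; exact Metric.mem_closedBall.mp hz
      calc ‖gradient f z - gradient f x‖ ≤ (L : ℝ) * ‖z - x‖ := h2
        _ ≤ K * ‖y - x‖ := by
            apply mul_le_mul (by simp [hKdef]) h3 (norm_nonneg _) hK.le
    have key := Convex.norm_image_sub_le_of_norm_fderiv_le' (𝕜 := ℝ)
      (fun z _ => hdiff z) bound (convex_closedBall x ‖y - x‖)
      (Metric.mem_closedBall_self (norm_nonneg _))
      (by rw [Metric.mem_closedBall, dist_eq_norm])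
    have happ : (fderiv ℝ f x) (y - x) = inner ℝ (gradient f x) (y - x) := by
      rw [hfd x]; exact InnerProductSpace.toDual_apply_apply
    rw [happ] at key
    have := (abs_le.mp (by rwa [Real.norm_eq_abs] at key)).2
    nlinarith [sq_nonneg ‖y - x‖]
  -- one-step descent
  have step : ∀ n, f (t (n + 1)) ≤ f (t n) - γ (n + 1) * G n ^ 2
      + K * (γ (n + 1) ^ 2 * G n ^ 2) := by
    intro n
    have hdvec : t (n + 1) - t n = -(γ (n + 1) • gradient f (t n)) := by
      rw [hrec n]; abel
    have hinner : (inner ℝ (gradient f (t n)) (t (n + 1) - t n) : ℝ)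
        = -(γ (n + 1) * G n ^ 2) := by
      rw [hdvec, inner_neg_right, real_inner_smul_right, real_inner_self_eq_norm_sq,
        hGdef n]
    have hnorm : ‖t (n + 1) - t n‖ ^ 2 = γ (n + 1) ^ 2 * G n ^ 2 := by
      rw [hdvec, norm_neg, norm_smul, Real.norm_eq_abs, abs_of_pos (hγpos (n + 1)),
        mul_pow, hGdef n]
    have := descent (t n) (t (n + 1))
    rw [hinner, hnorm] at this
    linarith
  -- γ tends to zero
  have hγ0 : Tendsto γ atTop (𝓝 0) := by
    have h2 : Tendsto (fun n => γ n ^ 2) atTop (𝓝 0) := hγ2.tendsto_atTop_zero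
    have hs : Tendsto (fun n => Real.sqrt (γ n ^ 2)) atTop (𝓝 (Real.sqrt 0)) :=
      (Real.continuous_sqrt.tendsto 0).comp h2
    have heq : γ = fun n => Real.sqrt (γ n ^ 2) :=
      funext fun n => (Real.sqrt_sq (hγpos n).le).symm
    rw [heq]
    simpa using hs
  -- choose N with K * γ k ≤ 1/2 for k ≥ N
  obtain ⟨N, hN⟩ : ∃ N, ∀ k ≥ N, K * γ k ≤ 1 / 2 := by
    obtain ⟨N, hN⟩ := (Metric.tendsto_atTop.mp hγ0) (1 / (2 * K)) (by positivity)
    refine ⟨N, fun k hk => ?_⟩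
    have := hN k hk
    rw [Real.dist_eq, sub_zero, abs_of_nonneg (hγpos k).le] at this
    calc K * γ k ≤ K * (1 / (2 * K)) := mul_le_mul_of_nonneg_left this.le hK.le
      _ = 1 / 2 := by field_simp
  have hdec : ∀ n, N ≤ n → f (t (n + 1)) ≤ f (t n) - γ (n + 1) / 2 * G n ^ 2 := by
    intro n hn
    have h1 := step n
    have h2 : K * γ (n + 1) ≤ 1 / 2 := hN (n + 1) (by omega)
    have h3 : 0 ≤ γ (n + 1) * G n ^ 2 := mul_nonneg (hγpos _).le (sq_nonneg _)
    have h4 : K * (γ (n + 1) ^ 2 * G n ^ 2) ≤ 1 / 2 * (γ (n + 1) * G n ^ 2) := by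
      have : K * (γ (n + 1) ^ 2 * G n ^ 2) = (K * γ (n + 1)) * (γ (n + 1) * G n ^ 2) := by
        ring
      rw [this]
      exact mul_le_mul_of_nonneg_right h2 h3
    have h5 : γ (n + 1) / 2 * G n ^ 2 = 1 / 2 * (γ (n + 1) * G n ^ 2) := by ring
    rw [h5]
    linarith
  -- f bounded below
  obtain ⟨θ₀, hθ₀mem, hθ₀min⟩ := (hlevel (f (t 0))).exists_isMinOn
    ⟨t 0, by simp⟩ hf.continuous.continuousOn
  have hlb : ∀ x, f θ₀ ≤ f x := by
    intro x
    rcases le_or_gt (f x) (f (t 0)) with h | h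
    · exact (isMinOn_iff.mp hθ₀min) x h
    · exact ((isMinOn_iff.mp hθ₀min) (t 0) (by simp)).trans h.le
  -- monotone after N
  have hmono : ∀ a b, N ≤ a → a ≤ b → f (t b) ≤ f (t a) := by
    intro a b hNa hab
    induction b, hab using Nat.le_induction with
    | base => exact le_rfl
    | succ b hb ih =>
      have := hdec b (le_trans hNa hb)
      have h3 : 0 ≤ γ (b + 1) / 2 * G b ^ 2 :=
        mul_nonneg (by linarith [hγpos (b + 1)]) (sq_nonneg _)
      linarith
  -- telescoping bound
  have htel : ∀ M, f (t (N + M)) + ∑ i ∈ Finset.range M, γ (N + i + 1) / 2 * G (N + i) ^ 2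
      ≤ f (t N) := by
    intro M
    induction M with
    | zero => simp
    | succ M ih =>
      rw [Finset.sum_range_succ, ← add_assoc]
      have h1 := hdec (N + M) (by omega)
      have h2 : N + M + 1 = N + (M + 1) := by omega
      have h1' : f (t (N + (M + 1))) ≤ f (t (N + M)) - γ (N + M + 1) / 2 * G (N + M) ^ 2 := by
        rw [← h2]; exact h1
      linarith
  -- summability of γ(n+1) G n ^ 2
  have hsumS : Summable (fun n => γ (n + 1) * G n ^ 2) := by
    apply (summable_nat_add_iff N).mp
    apply summable_of_sum_range_le (c := 2 * (f (t N) - f θ₀))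
      (fun n => mul_nonneg (hγpos _).le (sq_nonneg _))
    intro M
    have heq : ∑ i ∈ Finset.range M, γ (i + N + 1) * G (i + N) ^ 2
        = 2 * ∑ i ∈ Finset.range M, γ (N + i + 1) / 2 * G (N + i) ^ 2 := by
      rw [Finset.mul_sum]
      apply Finset.sum_congr rfl
      intro i _
      have h : i + N = N + i := by omega
      rw [h]; ring
    rw [heq]
    have := htel M
    have := hlb (t (N + M))
    linarith
  -- uniform bound on f (t n)
  obtain ⟨C, hC⟩ : ∃ C, ∀ n, f (t n) ≤ C := by
    refine ⟨(Finset.range (N + 1)).sup' (by simp) (fun i => f (t i)), fun n => ?_⟩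
    rcases le_or_gt n N with h | h
    · exact Finset.le_sup' (fun i => f (t i)) (Finset.mem_range.mpr (by omega : n < N + 1))
    · exact (hmono N n le_rfl h.le).trans
        (Finset.le_sup' (fun i => f (t i)) (Finset.mem_range.mpr (by omega : N < N + 1)))
  have hmem : ∀ n, t n ∈ {θ | f θ ≤ C} := fun n => hC n
  -- chain step for G
  have hGstep : ∀ n, G (n + 1) ≤ G n + K * (γ (n + 1) * G n) := by
    intro n
    have h1 : G (n + 1) ≤ G n + ‖gradient f (t (n + 1)) - gradient f (t n)‖ := by
      rw [hGdef, hGdef]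
      have := norm_add_le (gradient f (t n)) (gradient f (t (n + 1)) - gradient f (t n))
      simpa using this
    have h2 : ‖gradient f (t (n + 1)) - gradient f (t n)‖
        ≤ (L : ℝ) * ‖t (n + 1) - t n‖ := by
      have := hf_lip.dist_le_mul (t (n + 1)) (t n)
      rw [dist_eq_norm, dist_eq_norm] at this
      exact this
    have h3 : ‖t (n + 1) - t n‖ = γ (n + 1) * G n := by
      have hdvec : t (n + 1) - t n = -(γ (n + 1) • gradient f (t n)) := by
        rw [hrec n]; abel
      rw [hdvec, norm_neg, norm_smul, Real.norm_eq_abs, abs_of_pos (hγpos (n + 1)),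
        hGdef n]
    have h4 : (L : ℝ) * (γ (n + 1) * G n) ≤ K * (γ (n + 1) * G n) := by
      apply mul_le_mul_of_nonneg_right (by simp [hKdef])
        (mul_nonneg (hγpos _).le (hGpos n))
    rw [h3] at h2
    linarith
  -- G tends to zero
  have hG0 : Tendsto G atTop (𝓝 0) :=
    crossing_lemma G γ K hK hGpos hγpos hGstep hsumS hγ1 hγ0
  -- gradient continuous
  have hgc : Continuous (gradient f) := by
    have heq : gradient f = fun x => (InnerProductSpace.toDual ℝ (EuclideanSpace ℝ (Fin d))).symm (fderiv ℝ f x) := by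
      funext x
      rw [hfd x, LinearIsometryEquiv.symm_apply_apply]
    rw [heq]
    exact (InnerProductSpace.toDual ℝ (EuclideanSpace ℝ (Fin d))).symm.continuous.comp (hf.continuous_fderiv one_ne_zero)
  -- conclusion by compactness
  apply tendsto_of_subseq_tendsto
  intro ns hns
  obtain ⟨a, haK, φ, hφ, hconv⟩ := (hlevel C).tendsto_subseq
    (x := fun k => t (ns k)) (fun k => hmem (ns k))
  refine ⟨φ, ?_⟩
  have hconv' : Tendsto (fun k => t (ns (φ k))) atTop (𝓝 a) := hconv
  have ha𝓛 : a ∈ 𝓛 := by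
    rw [h𝓛]
    have h1 : Tendsto (fun k => gradient f (t (ns (φ k)))) atTop (𝓝 (gradient f a)) :=
      (hgc.tendsto a).comp hconv'
    have h2 : Tendsto (fun k => gradient f (t (ns (φ k)))) atTop (𝓝 0) := by
      rw [tendsto_zero_iff_norm_tendsto_zero]
      have heq : (fun k => ‖gradient f (t (ns (φ k)))‖) = fun k => G (ns (φ k)) :=
        funext fun k => (hGdef _).symm
      rw [heq]
      exact hG0.comp (hns.comp hφ.tendsto_atTop)
    exact tendsto_nhds_unique h1 h2
  have hfin : Tendsto (fun k => Metric.infDist (t (ns (φ k))) 𝓛) atTop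
      (𝓝 (Metric.infDist a 𝓛)) := ((Metric.continuous_infDist_pt 𝓛).tendsto a).comp hconv'
  rwa [Metric.infDist_zero_of_mem ha𝓛] at hfin
end
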